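/- Let α, β ∈ ℕ with α, β > 1 be multiplicatively independent and let I ⊆ ℝ_{>0} be a non-empty open interval. Then there exist infinitely many pairs (n₁, n₂) ∈ ℕ × ℕ such that α^{n₁}/β^{n₂} ∈ I. -/
import Mathlib

open Set

/-- Stepping lemma: if the set `{m*a - n*b : m n : ℕ}` contains arbitrarily small positive
elements, then it hits every open interval with both indices arbitrarily large. -/
lemma kronecker_aux_step (a b : ℝ) (ha : 0 < a) (hb : 0 < b)
    (hsmall : ∀ ε : ℝ, 0 < ε → ∃ m n : ℕ,
      0 < (m : ℝ) * a - n * b ∧ (m : ℝ) * a - n * b < ε) :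
    ∀ c d : ℝ, c < d → ∀ M : ℕ, ∃ m n : ℕ, M ≤ m ∧ M ≤ n ∧
      (m : ℝ) * a - n * b ∈ Set.Ioo c d := by
  intro c d hcd M
  have hdc : 0 < d - c := sub_pos.2 hcd
  obtain ⟨m₀, n₀, hs0, hsε⟩ := hsmall (min (d - c) (min a b))
    (lt_min hdc (lt_min ha hb))
  set s := (m₀ : ℝ) * a - n₀ * b with hs_def
  have hsd : s < d - c := lt_of_lt_of_le hsε (min_le_left _ _)
  have hsa : s < a := lt_of_lt_of_le hsε ((min_le_right _ _).trans (min_le_left _ _))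
  have hsb : s < b := lt_of_lt_of_le hsε ((min_le_right _ _).trans (min_le_right _ _))
  have hm₀ : 1 ≤ m₀ := by
    rcases Nat.eq_zero_or_pos m₀ with h | h
    · exfalso
      have hnb : 0 ≤ (n₀ : ℝ) * b := by positivity
      rw [hs_def, h] at hs0
      push_cast at hs0
      nlinarith
    · exact h
  have hn₀ : 1 ≤ n₀ := by
    rcases Nat.eq_zero_or_pos n₀ with h | h
    · exfalso
      have hma : (1 : ℝ) ≤ (m₀ : ℝ) := by exact_mod_cast hm₀
      rw [hs_def, h] at hsa
      push_cast at hsa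
      nlinarith
    · exact h
  obtain ⟨N, hN⟩ := exists_nat_ge (max (((M : ℝ) * s - c) / b) ((1 - c) / b))
  have hN1 : ((M : ℝ) * s - c) / b ≤ N := le_trans (le_max_left _ _) hN
  have hN2 : (1 - c) / b ≤ N := le_trans (le_max_right _ _) hN
  rw [div_le_iff₀ hb] at hN1 hN2
  set c' := c + (N : ℝ) * b with hc'_def
  have hc'pos : 0 < c' := by simp only [hc'_def]; linarith
  have hc'M : (M : ℝ) * s ≤ c' := by simp only [hc'_def]; linarith
  set k := Nat.floor (c' / s) + 1 with hk_def
  have hks : c' < (k : ℝ) * s := by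
    have h1 := Nat.lt_floor_add_one (c' / s)
    rw [div_lt_iff₀ hs0] at h1
    calc c' < (↑⌊c' / s⌋₊ + 1) * s := h1
    _ = (k : ℝ) * s := by push_cast [hk_def]; ring
  have hks2 : (k : ℝ) * s ≤ c' + s := by
    have h1 := Nat.floor_le (le_of_lt (div_pos hc'pos hs0))
    have h2 : (k : ℝ) = ↑⌊c' / s⌋₊ + 1 := by push_cast [hk_def]; ring
    rw [h2]
    have := (le_div_iff₀ hs0).mp h1
    nlinarith
  have hkM : M ≤ k := by
    by_contra h
    push_neg at h
    have : (k : ℝ) ≤ (M : ℝ) := by exact_mod_cast h.le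
    nlinarith
  refine ⟨k * m₀, k * n₀ + N, ?_, ?_, ?_, ?_⟩
  · exact hkM.trans (Nat.le_mul_of_pos_right k hm₀)
  · exact (hkM.trans (Nat.le_mul_of_pos_right k hn₀)).trans (Nat.le_add_right _ _)
  · -- c < value
    have hval : ((k * m₀ : ℕ) : ℝ) * a - ((k * n₀ + N : ℕ) : ℝ) * b
        = (k : ℝ) * s - (N : ℝ) * b := by push_cast [hs_def]; ring
    rw [hval]
    simp only [hc'_def] at hks
    linarith
  · have hval : ((k * m₀ : ℕ) : ℝ) * a - ((k * n₀ + N : ℕ) : ℝ) * b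
        = (k : ℝ) * s - (N : ℝ) * b := by push_cast [hs_def]; ring
    rw [hval]
    simp only [hc'_def] at hks2
    linarith

/-- Let `α, β > 1` be multiplicatively independent natural numbers and let `I` be a non-empty
open interval contained in the positive reals. Then there are infinitely many pairs
`(n₁, n₂) ∈ ℕ × ℕ` such that `α^{n₁}/β^{n₂} ∈ I`. -/
theorem kronecker_ratio_infinite (α β : ℕ) (hα : 1 < α) (hβ : 1 < β)
    (hind : ∀ n₁ n₂ : ℕ, α ^ n₁ = β ^ n₂ → n₁ = 0 ∧ n₂ = 0)
    (I : Set ℝ) (hopen : IsOpen I) (hinterval : I.OrdConnected)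
    (hne : I.Nonempty) (hpos : I ⊆ Set.Ioi (0 : ℝ)) :
    {p : ℕ × ℕ | (α : ℝ) ^ p.1 / (β : ℝ) ^ p.2 ∈ I}.Infinite := by
  set a := Real.log α with ha_def
  set b := Real.log β with hb_def
  have hα1 : (1 : ℝ) < (α : ℝ) := by exact_mod_cast hα
  have hβ1 : (1 : ℝ) < (β : ℝ) := by exact_mod_cast hβ
  have ha : 0 < a := Real.log_pos hα1
  have hb : 0 < b := Real.log_pos hβ1
  have hexpa : ∀ m : ℕ, Real.exp ((m : ℝ) * a) = (α : ℝ) ^ m := by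
    intro m
    rw [Real.exp_nat_mul, Real.exp_log (by linarith)]
  have hexpb : ∀ n : ℕ, Real.exp ((n : ℝ) * b) = (β : ℝ) ^ n := by
    intro n
    rw [Real.exp_nat_mul, Real.exp_log (by linarith)]
  -- the values α^m / β^n as exponentials
  have hval : ∀ m n : ℕ, (α : ℝ) ^ m / (β : ℝ) ^ n = Real.exp ((m : ℝ) * a - n * b) := by
    intro m n
    rw [Real.exp_sub, hexpa, hexpb]
  -- the subgroup generated by a and b is dense
  have hdense : Dense ((AddSubgroup.closure ({a, b} : Set ℝ) : AddSubgroup ℝ) : Set ℝ) := by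
    rcases (AddSubgroup.closure ({a, b} : Set ℝ)).dense_or_cyclic with hd | ⟨g, hg⟩
    · exact hd
    · exfalso
      have hamem : a ∈ AddSubgroup.closure ({a, b} : Set ℝ) :=
        AddSubgroup.subset_closure (by simp)
      have hbmem : b ∈ AddSubgroup.closure ({a, b} : Set ℝ) :=
        AddSubgroup.subset_closure (by simp)
      rw [hg, AddSubgroup.mem_closure_singleton] at hamem hbmem
      obtain ⟨p, hp⟩ := hamem
      obtain ⟨q, hq⟩ := hbmem
      have hab : (q : ℝ) * a = (p : ℝ) * b := by
        rw [← hp, ← hq]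
        simp only [zsmul_eq_mul]
        ring
      -- p, q are nonzero of the same sign
      have hq0 : q ≠ 0 := by
        rintro rfl; rw [zero_zsmul] at hq; linarith
      have hp0 : p ≠ 0 := by
        rintro rfl; rw [zero_zsmul] at hp; linarith
      -- WLOG q > 0 (otherwise negate both)
      obtain ⟨p', q', hp', hq', hab'⟩ : ∃ p' q' : ℤ, 0 < p' ∧ 0 < q' ∧
          (q' : ℝ) * a = (p' : ℝ) * b := by
        rcases lt_or_gt_of_ne hq0 with h | h
        · refine ⟨-p, -q, ?_, by omega, by push_cast; linarith⟩
          by_contra hple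
          push_neg at hple
          have hpnn : 0 < p := by omega
          have : (q : ℝ) * a < 0 := by
            have : (q : ℝ) < 0 := by exact_mod_cast h
            nlinarith
          have : 0 < (p : ℝ) * b := by
            have : (0 : ℝ) < (p : ℝ) := by exact_mod_cast hpnn
            nlinarith
          linarith [hab]
        · refine ⟨p, q, ?_, h, hab⟩
          by_contra hple
          push_neg at hple
          have hpneg : p < 0 := by omega
          have h1 : 0 < (q : ℝ) * a := by
            have : (0 : ℝ) < (q : ℝ) := by exact_mod_cast h
            nlinarith
          have h2 : (p : ℝ) * b < 0 := by
            have : (p : ℝ) < 0 := by exact_mod_cast hpneg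
            nlinarith
          linarith [hab]
      -- exponentiate
      have hcast : ((q'.toNat : ℕ) : ℝ) = (q' : ℝ) := by
        exact_mod_cast Int.toNat_of_nonneg hq'.le
      have hcast' : ((p'.toNat : ℕ) : ℝ) = (p' : ℝ) := by
        exact_mod_cast Int.toNat_of_nonneg hp'.le
      have heq : (α : ℝ) ^ q'.toNat = (β : ℝ) ^ p'.toNat := by
        rw [← hexpa, ← hexpb, hcast, hcast', hab']
      have heqn : α ^ q'.toNat = β ^ p'.toNat := by
        have := heq
        push_cast at this
        exact_mod_cast this
      have := (hind _ _ heqn).1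
      omega
  -- small elements with natural coefficients, in one direction or the other
  have hsmall_exists : ∀ ε : ℝ, 0 < ε → ε < min a b → ∃ m n : ℕ,
      ((0 < (m : ℝ) * a - n * b ∧ (m : ℝ) * a - n * b < ε) ∨
       (0 < (n : ℝ) * b - m * a ∧ (n : ℝ) * b - m * a < ε)) := by
    intro ε hε hεab
    obtain ⟨g, hgG, hg0, hgε⟩ : ∃ g ∈ AddSubgroup.closure ({a, b} : Set ℝ), g ∈ Ioo 0 ε := by
      have := hdense.exists_mem_open isOpen_Ioo (nonempty_Ioo.mpr hε)
      obtain ⟨g, hg1, hg2⟩ := this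
      exact ⟨g, hg1, hg2⟩
    rw [AddSubgroup.mem_closure_pair] at hgG
    obtain ⟨m, n, hmn⟩ := hgG
    have hmn' : (m : ℝ) * a + (n : ℝ) * b = g := by
      rw [← hmn]; push_cast [zsmul_eq_mul]; ring
    have hεa : ε < a := lt_of_lt_of_le hεab (min_le_left _ _)
    have hεb : ε < b := lt_of_lt_of_le hεab (min_le_right _ _)
    -- sign analysis
    rcases le_or_gt m 0 with hm | hm <;> rcases le_or_gt n 0 with hn | hn
    · -- both nonpositive: g ≤ 0, contradiction
      exfalso
      have h1 : (m : ℝ) * a ≤ 0 := by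
        have : (m : ℝ) ≤ 0 := by exact_mod_cast hm
        nlinarith
      have h2 : (n : ℝ) * b ≤ 0 := by
        have : (n : ℝ) ≤ 0 := by exact_mod_cast hn
        nlinarith
      linarith
    · -- m ≤ 0 < n : small negative element (from the S-viewpoint): n*b - (-m)*a = g
      refine ⟨(-m).toNat, n.toNat, Or.inr ⟨?_, ?_⟩⟩ <;>
      · have hc1 : (((-m).toNat : ℕ) : ℝ) = -(m : ℝ) := by
          exact_mod_cast Int.toNat_of_nonneg (by omega : (0 : ℤ) ≤ -m)
        have hc2 : ((n.toNat : ℕ) : ℝ) = (n : ℝ) := by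
          exact_mod_cast Int.toNat_of_nonneg hn.le
        rw [hc1, hc2]
        linarith [hmn', hg0, hgε]
    · -- n ≤ 0 < m : small positive element m*a - (-n)*b = g
      refine ⟨m.toNat, (-n).toNat, Or.inl ⟨?_, ?_⟩⟩ <;>
      · have hc1 : ((m.toNat : ℕ) : ℝ) = (m : ℝ) := by
          exact_mod_cast Int.toNat_of_nonneg hm.le
        have hc2 : (((-n).toNat : ℕ) : ℝ) = -(n : ℝ) := by
          exact_mod_cast Int.toNat_of_nonneg (by omega : (0 : ℤ) ≤ -n)
        rw [hc1, hc2]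
        linarith [hmn', hg0, hgε]
    · -- both positive: g ≥ a + b > ε, contradiction
      exfalso
      have h1 : (1 : ℝ) ≤ (m : ℝ) := by exact_mod_cast hm
      have h2 : (1 : ℝ) ≤ (n : ℝ) := by exact_mod_cast hn
      nlinarith
  -- density of {m*a - n*b : m n ℕ} with large indices, via dichotomy
  have hkey : ∀ c d : ℝ, c < d → ∀ M : ℕ, ∃ m n : ℕ, M ≤ m ∧ M ≤ n ∧
      (m : ℝ) * a - n * b ∈ Set.Ioo c d := by
    by_cases H : ∀ ε : ℝ, 0 < ε → ∃ m n : ℕ,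
        0 < (m : ℝ) * a - n * b ∧ (m : ℝ) * a - n * b < ε
    · exact kronecker_aux_step a b ha hb H
    · push_neg at H
      obtain ⟨ε₀, hε₀, hε₀prop⟩ := H
      have H' : ∀ ε : ℝ, 0 < ε → ∃ n m : ℕ,
          0 < (n : ℝ) * b - m * a ∧ (n : ℝ) * b - m * a < ε := by
        intro ε hε
        set ε' := min ε (min ε₀ ((min a b) / 2)) with hε'_def
        have hε' : 0 < ε' := by
          apply lt_min hε (lt_min hε₀ _)
          have := lt_min ha hb
          positivity
        have hε'ab : ε' < min a b := by
          have h1 : ε' ≤ min a b / 2 :=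
            (min_le_right _ _).trans (min_le_right _ _)
          have h2 : 0 < min a b := lt_min ha hb
          linarith
        obtain ⟨m, n, hcase⟩ := hsmall_exists ε' hε' hε'ab
        rcases hcase with ⟨h1, h2⟩ | ⟨h1, h2⟩
        · exfalso
          have := hε₀prop m n h1
          have hε'ε₀ : ε' ≤ ε₀ := (min_le_right _ _).trans (min_le_left _ _)
          linarith
        · exact ⟨n, m, h1, lt_of_lt_of_le h2 (min_le_left _ _)⟩
      intro c d hcd M
      obtain ⟨n, m, hn, hm, hmem⟩ :=
        kronecker_aux_step b a hb ha H' (-d) (-c) (by linarith) M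
      refine ⟨m, n, hm, hn, ?_, ?_⟩
      · have := hmem.2; linarith
      · have := hmem.1; linarith
  -- now derive the main statement
  obtain ⟨x, hx⟩ := hne
  have hx0 : 0 < x := hpos hx
  obtain ⟨u, v, hxuv, huvI⟩ := mem_nhds_iff_exists_Ioo_subset.mp (hopen.mem_nhds hx)
  set u' := max u (x / 2) with hu'_def
  have hu'pos : 0 < u' := lt_of_lt_of_le (by linarith) (le_max_right _ _)
  have hu'x : u' < x := max_lt hxuv.1 (by linarith)
  have hxv : x < v := hxuv.2
  have hu'v : u' < v := hu'x.trans hxv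
  have hsub : Ioo u' v ⊆ I := fun y hy => huvI ⟨lt_of_le_of_lt (le_max_left _ _) hy.1, hy.2⟩
  set c := Real.log u' with hc_def
  set d := Real.log v with hd_def
  have hcd : c < d := Real.log_lt_log hu'pos hu'v
  -- membership criterion
  have hcrit : ∀ m n : ℕ, (m : ℝ) * a - n * b ∈ Set.Ioo c d →
      ((m, n) ∈ {p : ℕ × ℕ | (α : ℝ) ^ p.1 / (β : ℝ) ^ p.2 ∈ I}) := by
    intro m n hmem
    simp only [Set.mem_setOf_eq]
    apply hsub
    rw [hval m n]
    constructor
    · rw [← Real.exp_log hu'pos]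
      exact Real.exp_lt_exp.mpr hmem.1
    · rw [← Real.exp_log (hu'pos.trans hu'v)]
      exact Real.exp_lt_exp.mpr hmem.2
  -- infinitude
  by_contra hfin
  rw [Set.not_infinite] at hfin
  obtain ⟨M, hM⟩ := (hfin.image Prod.fst).bddAbove
  obtain ⟨m, n, hm, _, hmem⟩ := hkey c d hcd (M + 1)
  have hmM : m ≤ M := hM (Set.mem_image_of_mem Prod.fst (hcrit m n hmem))
  omega
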